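/- Let I, J ⊆ ℝ be open intervals, D = I × J, f : I → ℝ, g : J → ℝ smooth with f + g nowhere zero, H = 1/(f + g), and let ω, Q, R : D → ℝ be smooth satisfying the Gauss equation (G₀) and the Codazzi equations (C₀) with mean curvature H. Fix τ ∈ ℝ, τ ≠ 0, and set λ(u,v) = (1 − 2iτ g(v))/(1 + 2iτ f(u)) (1 + 2iτf ≠ 0 automatically). Let Ψ : D → SL₂(ℂ) be smooth with ∂_u Ψ = Ψ U_λ, ∂_v Ψ = Ψ V_λ, where U_λ = [[−ω_u/4, −Q e^{−ω/2}], [(H/2) λ e^{ω/2}, ω_u/4]] and V_λ = [[ω_v/4, −(H/2) λ^{−1} e^{ω/2}], [R e^{−ω/2}, −ω_v/4]]. Define F = Ψ i′ Ψ* and N = −Ψ j′ Ψ*, where i′ = [[0, −i],[i, 0]], j′ = [[0,1],[1,0]], and Ψ* is the conjugate transpose. Then F and N take values in the Hermitian 2×2 matrices, det F = −1, and with the scalar product ⟨X,Y⟩ = −(1/2)tr(i′ X i′ Yᵀ) on Hermitian matrices: ⟨∂_u F, ∂_u F⟩ = ⟨∂_v F, ∂_v F⟩ = 0; 2⟨∂_u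 F, ∂_v F⟩ = 4τ² e^ω/((1 + 4τ²f²)(1 + 4τ²g²)); ⟨N,N⟩ = 1; and ⟨N, F⟩ = ⟨N, ∂_u F⟩ = ⟨N, ∂_v F⟩ = 0. -/

import Mathlib

open Matrix

noncomputable section

/-- Partial derivative in the first variable. -/
def pd1 (f : ℝ → ℝ → ℝ) (u v : ℝ) : ℝ := deriv (fun x => f x v) u

/-- Partial derivative in the second variable. -/
def pd2 (f : ℝ → ℝ → ℝ) (u v : ℝ) : ℝ := deriv (fun y => f u y) v

/-- The Gauss equation (G_c) at a point. -/
def GaussEq (c : ℝ) (ω Q R H : ℝ → ℝ → ℝ) (u v : ℝ) : Prop :=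
  pd2 (pd1 ω) u v + (1 / 2) * ((H u v) ^ 2 + c) * Real.exp (ω u v)
    - 2 * Q u v * R u v * Real.exp (-ω u v) = 0

/-- The Codazzi equations (C_c) at a point. -/
def CodazziEq (ω Q R H : ℝ → ℝ → ℝ) (u v : ℝ) : Prop :=
  pd1 H u v = 2 * Real.exp (-ω u v) * pd2 Q u v ∧
  pd2 H u v = 2 * Real.exp (-ω u v) * pd1 R u v

/-- Smoothness of a two-variable function on a set. -/
def Smooth2 (f : ℝ → ℝ → ℝ) (s : Set (ℝ × ℝ)) : Prop :=
  ContDiffOn ℝ (⊤ : ℕ∞) (fun p : ℝ × ℝ => f p.1 p.2) s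

/-- Entrywise derivative of a complex-matrix-valued function of a real variable. -/
def mderiv (f : ℝ → Matrix (Fin 2) (Fin 2) ℂ) (x : ℝ) : Matrix (Fin 2) (Fin 2) ℂ :=
  Matrix.of fun i j => deriv (fun t => f t i j) x

/-- The matrix `U_λ` of the complexified Lax pair. -/
def UmatC (ω Q H : ℝ → ℝ → ℝ) (lam : ℝ → ℝ → ℂ) (u v : ℝ) : Matrix (Fin 2) (Fin 2) ℂ :=
  !![(↑(-(pd1 ω u v) / 4) : ℂ), (↑(-(Q u v) * Real.exp (-(ω u v) / 2)) : ℂ);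
     (↑(H u v / 2) : ℂ) * lam u v * (↑(Real.exp (ω u v / 2)) : ℂ), (↑((pd1 ω u v) / 4) : ℂ)]

/-- The matrix `V_λ` of the complexified Lax pair. -/
def VmatC (ω R H : ℝ → ℝ → ℝ) (lam : ℝ → ℝ → ℂ) (u v : ℝ) : Matrix (Fin 2) (Fin 2) ℂ :=
  !![(↑((pd2 ω u v) / 4) : ℂ), -(↑(H u v / 2) : ℂ) * (lam u v)⁻¹ * (↑(Real.exp (ω u v / 2)) : ℂ);
     (↑(R u v * Real.exp (-(ω u v) / 2)) : ℂ), (↑(-(pd2 ω u v) / 4) : ℂ)]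

/-- The matrix `i′`. -/
def imat : Matrix (Fin 2) (Fin 2) ℂ := !![0, -Complex.I; Complex.I, 0]

/-- The matrix `j′`. -/
def jmat : Matrix (Fin 2) (Fin 2) ℂ := !![0, 1; 1, 0]

/-- The scalar product `⟨X,Y⟩ = −(1/2)tr(i′Xi′Yᵀ)` on Hermitian matrices
(the metric of `E⁴₁ = ℍ`). -/
def formH (X Y : Matrix (Fin 2) (Fin 2) ℂ) : ℂ :=
  -(1 / 2 : ℂ) * (imat * X * imat * Yᵀ).trace


set_option maxHeartbeats 1000000 in
lemma formH_eq (X Y : Matrix (Fin 2) (Fin 2) ℂ) :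
    formH X Y = -(1/2) * (X 0 0 * Y 1 1 + X 1 1 * Y 0 0 - X 0 1 * Y 1 0 - X 1 0 * Y 0 1) := by
  simp only [formH, imat, Matrix.trace_fin_two, Matrix.mul_apply, Matrix.transpose_apply,
    Fin.sum_univ_two]
  simp
  ring_nf
  rw [Complex.I_sq]
  ring

lemma formH_conj' (P A B : Matrix (Fin 2) (Fin 2) ℂ) :
    formH (P*A*Pᴴ) (P*B*Pᴴ) = (P 0 0 * P 1 1 - P 0 1 * P 1 0) *
      (star (P 0 0) * star (P 1 1) - star (P 0 1) * star (P 1 0)) * formH A B := by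
  rw [formH_eq, formH_eq]
  simp only [Matrix.mul_apply, Matrix.conjTranspose_apply, Fin.sum_univ_two]
  ring

lemma formH_conj (P A B : Matrix (Fin 2) (Fin 2) ℂ) (hP : P.det = 1) :
    formH (P*A*Pᴴ) (P*B*Pᴴ) = formH A B := by
  have h1 : P 0 0 * P 1 1 - P 0 1 * P 1 0 = 1 := by simpa [Matrix.det_fin_two] using hP
  have h2 := congrArg star h1
  simp only [star_sub, star_mul', star_one] at h2
  rw [formH_conj', h1]
  linear_combination formH A B * h2

lemma mderiv_conj (Φ : ℝ → Matrix (Fin 2) (Fin 2) ℂ) (u : ℝ) (P' C : Matrix (Fin 2) (Fin 2) ℂ)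
    (hd : ∀ i j, HasDerivAt (fun t => Φ t i j) (P' i j) u) :
    mderiv (fun t => Φ t * C * (Φ t)ᴴ) u = P' * C * (Φ u)ᴴ + Φ u * C * P'ᴴ := by
  ext i j
  show deriv (fun t => (Φ t * C * (Φ t)ᴴ) i j) u = _
  have hfun : (fun t => (Φ t * C * (Φ t)ᴴ) i j)
      = fun t => (Φ t i 0 * C 0 0 + Φ t i 1 * C 1 0) * star (Φ t j 0)
        + (Φ t i 0 * C 0 1 + Φ t i 1 * C 1 1) * star (Φ t j 1) := by
    funext t
    simp [Matrix.mul_apply, Matrix.conjTranspose_apply, Fin.sum_univ_two]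
  have big : HasDerivAt (fun t => (Φ t i 0 * C 0 0 + Φ t i 1 * C 1 0) * star (Φ t j 0)
        + (Φ t i 0 * C 0 1 + Φ t i 1 * C 1 1) * star (Φ t j 1))
      (((P' i 0 * C 0 0 + P' i 1 * C 1 0) * star (Φ u j 0)
          + (Φ u i 0 * C 0 0 + Φ u i 1 * C 1 0) * star (P' j 0))
        + ((P' i 0 * C 0 1 + P' i 1 * C 1 1) * star (Φ u j 1)
          + (Φ u i 0 * C 0 1 + Φ u i 1 * C 1 1) * star (P' j 1))) u :=
    ((((hd i 0).mul_const (C 0 0)).add ((hd i 1).mul_const (C 1 0))).mul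
        ((hd j 0).star)).add
      ((((hd i 0).mul_const (C 0 1)).add ((hd i 1).mul_const (C 1 1))).mul ((hd j 1).star))
  rw [hfun, big.deriv]
  simp [Matrix.mul_apply, Matrix.conjTranspose_apply, Fin.sum_univ_two, Matrix.add_apply]
  ring

section keyformH
variable (ω Q R H : ℝ → ℝ → ℝ) (lam : ℝ → ℝ → ℂ) (u v : ℝ)

set_option maxHeartbeats 1000000 in
lemma keyAA : formH (UmatC ω Q H lam u v * imat + imat * (UmatC ω Q H lam u v)ᴴ)
    (UmatC ω Q H lam u v * imat + imat * (UmatC ω Q H lam u v)ᴴ) = 0 := by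
  rw [formH_eq]
  simp only [UmatC, VmatC, imat, jmat, Matrix.add_apply, Matrix.mul_apply,
    Matrix.conjTranspose_apply, Matrix.neg_apply, Fin.sum_univ_two, Matrix.of_apply,
    Matrix.cons_val', Matrix.cons_val_zero, Matrix.cons_val_one, Matrix.head_cons,
    Matrix.empty_val', Matrix.cons_val_fin_one, Matrix.head_fin_const]
  simp only [star_mul', star_neg, star_zero, star_one, Complex.star_def,
    _root_.map_mul, Complex.conj_ofReal, map_div₀, map_neg, map_inv₀,
    Complex.conj_I, map_ofNat, mul_zero, zero_mul, add_zero, zero_add, mul_one, one_mul,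
    mul_neg, neg_mul, neg_neg, neg_zero, Complex.conj_conj]
  ring_nf
  try rw [Complex.I_sq]
  try push_cast
  try ring

set_option maxHeartbeats 1000000 in
lemma keyBB : formH (VmatC ω R H lam u v * imat + imat * (VmatC ω R H lam u v)ᴴ)
    (VmatC ω R H lam u v * imat + imat * (VmatC ω R H lam u v)ᴴ) = 0 := by
  rw [formH_eq]
  simp only [UmatC, VmatC, imat, jmat, Matrix.add_apply, Matrix.mul_apply,
    Matrix.conjTranspose_apply, Matrix.neg_apply, Fin.sum_univ_two, Matrix.of_apply,
    Matrix.cons_val', Matrix.cons_val_zero, Matrix.cons_val_one, Matrix.head_cons,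
    Matrix.empty_val', Matrix.cons_val_fin_one, Matrix.head_fin_const]
  simp only [star_mul', star_neg, star_zero, star_one, Complex.star_def,
    _root_.map_mul, Complex.conj_ofReal, map_div₀, map_neg, map_inv₀,
    Complex.conj_I, map_ofNat, mul_zero, zero_mul, add_zero, zero_add, mul_one, one_mul,
    mul_neg, neg_mul, neg_neg, neg_zero, Complex.conj_conj]
  ring_nf
  try rw [Complex.I_sq]
  try push_cast
  try ring

set_option maxHeartbeats 1000000 in
lemma keyNA : formH (-jmat) (UmatC ω Q H lam u v * imat + imat * (UmatC ω Q H lam u v)ᴴ) = 0 := by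
  rw [formH_eq]
  simp only [UmatC, VmatC, imat, jmat, Matrix.add_apply, Matrix.mul_apply,
    Matrix.conjTranspose_apply, Matrix.neg_apply, Fin.sum_univ_two, Matrix.of_apply,
    Matrix.cons_val', Matrix.cons_val_zero, Matrix.cons_val_one, Matrix.head_cons,
    Matrix.empty_val', Matrix.cons_val_fin_one, Matrix.head_fin_const]
  simp only [star_mul', star_neg, star_zero, star_one, Complex.star_def,
    _root_.map_mul, Complex.conj_ofReal, map_div₀, map_neg, map_inv₀,
    Complex.conj_I, map_ofNat, mul_zero, zero_mul, add_zero, zero_add, mul_one, one_mul,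
    mul_neg, neg_mul, neg_neg, neg_zero, Complex.conj_conj]
  ring_nf
  try rw [Complex.I_sq]
  try push_cast
  try ring

set_option maxHeartbeats 1000000 in
lemma keyNB : formH (-jmat) (VmatC ω R H lam u v * imat + imat * (VmatC ω R H lam u v)ᴴ) = 0 := by
  rw [formH_eq]
  simp only [UmatC, VmatC, imat, jmat, Matrix.add_apply, Matrix.mul_apply,
    Matrix.conjTranspose_apply, Matrix.neg_apply, Fin.sum_univ_two, Matrix.of_apply,
    Matrix.cons_val', Matrix.cons_val_zero, Matrix.cons_val_one, Matrix.head_cons,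
    Matrix.empty_val', Matrix.cons_val_fin_one, Matrix.head_fin_const]
  simp only [star_mul', star_neg, star_zero, star_one, Complex.star_def,
    _root_.map_mul, Complex.conj_ofReal, map_div₀, map_neg, map_inv₀,
    Complex.conj_I, map_ofNat, mul_zero, zero_mul, add_zero, zero_add, mul_one, one_mul,
    mul_neg, neg_mul, neg_neg, neg_zero, Complex.conj_conj]
  ring_nf
  try rw [Complex.I_sq]
  try push_cast
  try ring

lemma keyNN : formH (-jmat) (-jmat) = 1 := by
  rw [formH_eq]
  simp only [jmat, Matrix.neg_apply, Matrix.of_apply, Matrix.cons_val', Matrix.cons_val_zero,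
    Matrix.cons_val_one, Matrix.head_cons, Matrix.empty_val', Matrix.cons_val_fin_one,
    Matrix.head_fin_const]
  norm_num

lemma keyNF : formH (-jmat) imat = 0 := by
  rw [formH_eq]
  simp only [jmat, imat, Matrix.neg_apply, Matrix.of_apply, Matrix.cons_val', Matrix.cons_val_zero,
    Matrix.cons_val_one, Matrix.head_cons, Matrix.empty_val', Matrix.cons_val_fin_one,
    Matrix.head_fin_const]
  ring

set_option maxHeartbeats 1000000 in
lemma keyAB : formH (UmatC ω Q H lam u v * imat + imat * (UmatC ω Q H lam u v)ᴴ)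
    (VmatC ω R H lam u v * imat + imat * (VmatC ω R H lam u v)ᴴ)
    = -(1/2) * ((↑(H u v / 2) * lam u v * ↑(Real.exp (ω u v / 2))
        - ↑(H u v / 2) * (starRingEnd ℂ) (lam u v) * ↑(Real.exp (ω u v / 2)))
      * (-(↑(H u v / 2)) * (lam u v)⁻¹ * ↑(Real.exp (ω u v / 2))
        + ↑(H u v / 2) * (starRingEnd ℂ) (lam u v)⁻¹ * ↑(Real.exp (ω u v / 2)))) := by
  rw [formH_eq]
  simp only [UmatC, VmatC, imat, jmat, Matrix.add_apply, Matrix.mul_apply,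
    Matrix.conjTranspose_apply, Matrix.neg_apply, Fin.sum_univ_two, Matrix.of_apply,
    Matrix.cons_val', Matrix.cons_val_zero, Matrix.cons_val_one, Matrix.head_cons,
    Matrix.empty_val', Matrix.cons_val_fin_one, Matrix.head_fin_const]
  simp only [star_mul', star_neg, star_zero, star_one, Complex.star_def,
    _root_.map_mul, Complex.conj_ofReal, map_div₀, map_neg, map_inv₀,
    Complex.conj_I, map_ofNat, mul_zero, zero_mul, add_zero, zero_add, mul_one, one_mul,
    mul_neg, neg_mul, neg_neg, neg_zero, Complex.conj_conj]
  ring_nf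
  try rw [Complex.I_sq]
  try push_cast
  try ring

end keyformH

set_option maxHeartbeats 1000000 in
lemma keylam (τ a b h E : ℝ) (hab : a + b ≠ 0) (hh : h = 1/(a+b)) :
    2 * (-(1/2 : ℂ) * ((↑(h/2) * ((1 - 2*(τ:ℂ)*(b:ℂ)*Complex.I)/(1 + 2*(τ:ℂ)*(a:ℂ)*Complex.I)) * ↑E
        - ↑(h/2) * (starRingEnd ℂ) ((1 - 2*(τ:ℂ)*(b:ℂ)*Complex.I)/(1 + 2*(τ:ℂ)*(a:ℂ)*Complex.I)) * ↑E)
      * (-(↑(h/2) : ℂ) * ((1 - 2*(τ:ℂ)*(b:ℂ)*Complex.I)/(1 + 2*(τ:ℂ)*(a:ℂ)*Complex.I))⁻¹ * ↑E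
        + ↑(h/2) * (starRingEnd ℂ) (((1 - 2*(τ:ℂ)*(b:ℂ)*Complex.I)/(1 + 2*(τ:ℂ)*(a:ℂ)*Complex.I))⁻¹) * ↑E)))
    = ((4*τ^2*(E*E)/((1+4*τ^2*a^2)*(1+4*τ^2*b^2)) : ℝ) : ℂ) := by
  set d1 : ℂ := 1 + 2*(τ:ℂ)*(a:ℂ)*Complex.I with hd1def
  set d2 : ℂ := 1 - 2*(τ:ℂ)*(a:ℂ)*Complex.I with hd2def
  set n1 : ℂ := 1 - 2*(τ:ℂ)*(b:ℂ)*Complex.I with hn1def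
  set n2 : ℂ := 1 + 2*(τ:ℂ)*(b:ℂ)*Complex.I with hn2def
  have hd1 : d1 ≠ 0 := by
    intro hcon; have := congrArg Complex.re hcon
    simp [hd1def, Complex.add_re, Complex.mul_re] at this
  have hd2 : d2 ≠ 0 := by
    intro hcon; have := congrArg Complex.re hcon
    simp [hd2def, Complex.sub_re, Complex.mul_re] at this
  have hn1 : n1 ≠ 0 := by
    intro hcon; have := congrArg Complex.re hcon
    simp [hn1def, Complex.sub_re, Complex.mul_re] at this
  have hn2 : n2 ≠ 0 := by
    intro hcon; have := congrArg Complex.re hcon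
    simp [hn2def, Complex.add_re, Complex.mul_re] at this
  have ha' : (1+4*τ^2*a^2 : ℝ) ≠ 0 := by positivity
  have hb' : (1+4*τ^2*b^2 : ℝ) ≠ 0 := by positivity
  have hA : ((1+4*τ^2*a^2 : ℝ) : ℂ) ≠ 0 := Complex.ofReal_ne_zero.mpr ha'
  have hB : ((1+4*τ^2*b^2 : ℝ) : ℂ) ≠ 0 := Complex.ofReal_ne_zero.mpr hb'
  have key2 : d1 * d2 = ((1+4*τ^2*a^2 : ℝ) : ℂ) := by
    rw [hd1def, hd2def]; push_cast
    linear_combination (-4*(τ:ℂ)^2*(a:ℂ)^2) * Complex.I_sq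
  have key3 : n1 * n2 = ((1+4*τ^2*b^2 : ℝ) : ℂ) := by
    rw [hn1def, hn2def]; push_cast
    linear_combination (-4*(τ:ℂ)^2*(b:ℂ)^2) * Complex.I_sq
  have hstar : (starRingEnd ℂ) (n1/d1) = n2/d2 := by
    rw [map_div₀]
    congr 1 <;>
      simp only [hd1def, hd2def, hn1def, hn2def, map_sub, map_add, _root_.map_mul, Complex.conj_I,
        Complex.conj_ofReal, _root_.map_one, map_ofNat] <;> ring
  have hl : n1/d1 = n1 * d2 / ((1+4*τ^2*a^2 : ℝ) : ℂ) := by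
    rw [div_eq_div_iff hd1 hA]; linear_combination (-n1) * key2
  have hlinv : (n1/d1)⁻¹ = d1 * n2 / ((1+4*τ^2*b^2 : ℝ) : ℂ) := by
    rw [inv_div, div_eq_div_iff hn1 hB]; linear_combination (-d1) * key3
  have hlstar : (starRingEnd ℂ) (n1/d1) = n2 * d1 / ((1+4*τ^2*a^2 : ℝ) : ℂ) := by
    rw [hstar, div_eq_div_iff hd2 hA]; linear_combination (-n2) * key2
  have hlinvstar : (starRingEnd ℂ) ((n1/d1)⁻¹) = d2 * n1 / ((1+4*τ^2*b^2 : ℝ) : ℂ) := by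
    rw [map_inv₀, hstar, inv_div, div_eq_div_iff hn2 hB]; linear_combination (-d2) * key3
  rw [hlinvstar, hlinv, hlstar, hl]
  have hc1 : ((h/2 : ℝ):ℂ) = (h:ℂ)/2 := by push_cast; ring
  have hc2 : ((4*τ^2*(E*E)/((1+4*τ^2*a^2)*(1+4*τ^2*b^2)) : ℝ) : ℂ)
      = (4*(τ:ℂ)^2*(E:ℂ)^2) / (((1+4*τ^2*a^2 : ℝ) : ℂ) * ((1+4*τ^2*b^2 : ℝ) : ℂ)) := by
    rw [Complex.ofReal_div]; push_cast; ring
  rw [hc1, hc2]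
  have hheq' : (h:ℂ) * ((a:ℂ)+(b:ℂ)) = 1 := by
    have : h * (a+b) = 1 := by rw [hh]; field_simp
    exact_mod_cast congrArg (Complex.ofReal) this
  have hI : Complex.I * Complex.I = -1 := Complex.I_mul_I
  rw [hd1def, hd2def, hn1def, hn2def]
  set A' : ℂ := ((1+4*τ^2*a^2 : ℝ) : ℂ)
  set B' : ℂ := ((1+4*τ^2*b^2 : ℝ) : ℂ)
  set s : ℂ := (a:ℂ) + (b:ℂ)
  linear_combination (-(4:ℂ)*(h:ℂ)^2*s^2*(τ:ℂ)^2*(E:ℂ)^2/(A'*B')) * hI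
    + ((4*(τ:ℂ)^2*(E:ℂ)^2*((h:ℂ)*s+1))/(A'*B')) * hheq'

lemma imat_conjTranspose : imatᴴ = imat := by
  ext i j
  fin_cases i <;> fin_cases j <;> simp [imat, Matrix.conjTranspose_apply]

lemma jmat_conjTranspose : jmatᴴ = jmat := by
  ext i j
  fin_cases i <;> fin_cases j <;> simp [jmat, Matrix.conjTranspose_apply]

lemma imat_det : imat.det = -1 := by
  simp [imat, Matrix.det_fin_two_of]


/-- immersion formula in the de Sitter space `S³₁`: for a solution `Ψ`
of the Lax pair with spectral parameter `λ = (1 − 2iτg)/(1 + 2iτf)`, the map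
`F = Ψi′Ψ*` takes values in `S³₁ = {X Hermitian, det X = −1}`, is conformal with
`2⟨F_u,F_v⟩ = 4τ²e^ω/((1+4τ²f²)(1+4τ²g²))`, and `N = −Ψj′Ψ*` is a unit normal. -/
theorem statement4
    (I J : Set ℝ)
    (hIopen : IsOpen I) (hIint : I.OrdConnected)
    (hJopen : IsOpen J) (hJint : J.OrdConnected)
    (f g : ℝ → ℝ)
    (hf : ContDiffOn ℝ (⊤ : ℕ∞) f I) (hg : ContDiffOn ℝ (⊤ : ℕ∞) g J)
    (hfg : ∀ u ∈ I, ∀ v ∈ J, f u + g v ≠ 0)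
    (τ : ℝ) (hτ : τ ≠ 0)
    (H : ℝ → ℝ → ℝ) (hH : ∀ u v, H u v = 1 / (f u + g v))
    (lam : ℝ → ℝ → ℂ)
    (hlam : ∀ u v, lam u v =
      (1 - 2 * (τ : ℂ) * (g v : ℂ) * Complex.I) / (1 + 2 * (τ : ℂ) * (f u : ℂ) * Complex.I))
    (ω Q R : ℝ → ℝ → ℝ)
    (hω : Smooth2 ω (I ×ˢ J)) (hQ : Smooth2 Q (I ×ˢ J)) (hR : Smooth2 R (I ×ˢ J))
    (hGauss : ∀ u ∈ I, ∀ v ∈ J, GaussEq 0 ω Q R H u v)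
    (hCodazzi : ∀ u ∈ I, ∀ v ∈ J, CodazziEq ω Q R H u v)
    (Ψ : ℝ → ℝ → Matrix (Fin 2) (Fin 2) ℂ)
    (hΨsmooth : ∀ i j, ContDiffOn ℝ (⊤ : ℕ∞) (fun p : ℝ × ℝ => Ψ p.1 p.2 i j) (I ×ˢ J))
    (hΨdet : ∀ u ∈ I, ∀ v ∈ J, (Ψ u v).det = 1)
    (hLaxU : ∀ u ∈ I, ∀ v ∈ J,
      mderiv (fun x => Ψ x v) u = Ψ u v * UmatC ω Q H lam u v)
    (hLaxV : ∀ u ∈ I, ∀ v ∈ J,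
      mderiv (fun y => Ψ u y) v = Ψ u v * VmatC ω R H lam u v)
    (F N : ℝ → ℝ → Matrix (Fin 2) (Fin 2) ℂ)
    (hF : ∀ u v, F u v = Ψ u v * imat * (Ψ u v)ᴴ)
    (hN : ∀ u v, N u v = -(Ψ u v * jmat * (Ψ u v)ᴴ)) :
    ∀ u ∈ I, ∀ v ∈ J,
      (F u v).IsHermitian ∧
      (N u v).IsHermitian ∧
      (F u v).det = -1 ∧
      formH (mderiv (fun x => F x v) u) (mderiv (fun x => F x v) u) = 0 ∧
      formH (mderiv (fun y => F u y) v) (mderiv (fun y => F u y) v) = 0 ∧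
      2 * formH (mderiv (fun x => F x v) u) (mderiv (fun y => F u y) v)
        = ((4 * τ ^ 2 * Real.exp (ω u v) /
            ((1 + 4 * τ ^ 2 * (f u) ^ 2) * (1 + 4 * τ ^ 2 * (g v) ^ 2)) : ℝ) : ℂ) ∧
      formH (N u v) (N u v) = 1 ∧
      formH (N u v) (F u v) = 0 ∧
      formH (N u v) (mderiv (fun x => F x v) u) = 0 ∧
      formH (N u v) (mderiv (fun y => F u y) v) = 0 := by
  intro u hu v hv
  have hmem : (u, v) ∈ I ×ˢ J := ⟨hu, hv⟩
  have hsopen : IsOpen (I ×ˢ J) := hIopen.prod hJopen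
  have hdet : (Ψ u v).det = 1 := hΨdet u hu v hv
  -- entrywise derivatives in the u-direction
  have hderU : ∀ i j, HasDerivAt (fun t => Ψ t v i j) ((Ψ u v * UmatC ω Q H lam u v) i j) u := by
    intro i j
    have hdiff : DifferentiableAt ℝ (fun p : ℝ × ℝ => Ψ p.1 p.2 i j) (u, v) :=
      ((hΨsmooth i j).contDiffAt (hsopen.mem_nhds hmem)).differentiableAt (by simp)
    have hcomp : DifferentiableAt ℝ (fun t : ℝ => Ψ t v i j) u :=
      by have := DifferentiableAt.comp (𝕜 := ℝ) u hdiff ((differentiableAt_id (𝕜 := ℝ) (x := u)).prodMk (differentiableAt_const (𝕜 := ℝ) v)); exact this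
    have hval : deriv (fun t => Ψ t v i j) u = (Ψ u v * UmatC ω Q H lam u v) i j :=
      congrFun (congrFun (hLaxU u hu v hv) i) j
    rw [← hval]
    exact hcomp.hasDerivAt
  have hderV : ∀ i j, HasDerivAt (fun t => Ψ u t i j) ((Ψ u v * VmatC ω R H lam u v) i j) v := by
    intro i j
    have hdiff : DifferentiableAt ℝ (fun p : ℝ × ℝ => Ψ p.1 p.2 i j) (u, v) :=
      ((hΨsmooth i j).contDiffAt (hsopen.mem_nhds hmem)).differentiableAt (by simp)
    have hcomp : DifferentiableAt ℝ (fun t : ℝ => Ψ u t i j) v :=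
      hdiff.comp v ((differentiableAt_const u).prodMk differentiableAt_id)
    have hval : deriv (fun t => Ψ u t i j) v = (Ψ u v * VmatC ω R H lam u v) i j :=
      congrFun (congrFun (hLaxV u hu v hv) i) j
    rw [← hval]
    exact hcomp.hasDerivAt
  -- the derivatives of F
  have hFu : mderiv (fun x => F x v) u
      = Ψ u v * (UmatC ω Q H lam u v * imat + imat * (UmatC ω Q H lam u v)ᴴ) * (Ψ u v)ᴴ := by
    have h1 : (fun x => F x v) = fun x => Ψ x v * imat * (Ψ x v)ᴴ := funext fun x => hF x v
    rw [h1, mderiv_conj (fun x => Ψ x v) u (Ψ u v * UmatC ω Q H lam u v) imat hderU,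
      Matrix.conjTranspose_mul]
    noncomm_ring
  have hFv : mderiv (fun y => F u y) v
      = Ψ u v * (VmatC ω R H lam u v * imat + imat * (VmatC ω R H lam u v)ᴴ) * (Ψ u v)ᴴ := by
    have h1 : (fun y => F u y) = fun y => Ψ u y * imat * (Ψ u y)ᴴ := funext fun y => hF u y
    rw [h1, mderiv_conj (fun y => Ψ u y) v (Ψ u v * VmatC ω R H lam u v) imat hderV,
      Matrix.conjTranspose_mul]
    noncomm_ring
  have hNeq : N u v = Ψ u v * (-jmat) * (Ψ u v)ᴴ := by
    rw [hN]
    noncomm_ring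
  refine ⟨?_, ?_, ?_, ?_, ?_, ?_, ?_, ?_, ?_, ?_⟩
  · -- F Hermitian
    rw [hF]
    show (Ψ u v * imat * (Ψ u v)ᴴ)ᴴ = _
    rw [Matrix.conjTranspose_mul, Matrix.conjTranspose_mul, Matrix.conjTranspose_conjTranspose,
      imat_conjTranspose, Matrix.mul_assoc]
  · -- N Hermitian
    rw [hN]
    show (-(Ψ u v * jmat * (Ψ u v)ᴴ))ᴴ = _
    rw [Matrix.conjTranspose_neg, Matrix.conjTranspose_mul, Matrix.conjTranspose_mul,
      Matrix.conjTranspose_conjTranspose, jmat_conjTranspose, Matrix.mul_assoc]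
  · -- det F = -1
    rw [hF, Matrix.det_mul, Matrix.det_mul, Matrix.det_conjTranspose, hdet, imat_det]
    simp
  · rw [hFu, formH_conj _ _ _ hdet, keyAA]
  · rw [hFv, formH_conj _ _ _ hdet, keyBB]
  · -- conformal factor
    rw [hFu, hFv, formH_conj _ _ _ hdet, keyAB]
    have hexp : Real.exp (ω u v) = Real.exp (ω u v / 2) * Real.exp (ω u v / 2) := by
      rw [← Real.exp_add, add_halves]
    rw [hexp, hlam u v, hH u v]
    exact keylam τ (f u) (g v) (1/(f u + g v)) (Real.exp (ω u v / 2)) (hfg u hu v hv) rfl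
  · rw [hNeq, formH_conj _ _ _ hdet, keyNN]
  · rw [hNeq, hF, show Ψ u v * imat * (Ψ u v)ᴴ = Ψ u v * imat * (Ψ u v)ᴴ from rfl,
      formH_conj _ _ _ hdet, keyNF]
  · rw [hNeq, hFu, formH_conj _ _ _ hdet, keyNA]
  · rw [hNeq, hFv, formH_conj _ _ _ hdet, keyNB]
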